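/- Any covering of the cluster manifold X'_F(m) by cluster tori of triangulations must use at least #X'_{F_2}(m) triangulations: distinct points of X'_{F_2}(m) ⊆ X'_F(m) cannot lie in the same cluster torus, since each triangulation admits a unique proper P¹(F_2)-coloring with the fixed boundary conditions. -/

import Mathlib

/-- The projective line over a field `F`. -/
abbrev P1 (F : Type*) [Field F] := Projectivization F (F × F)

/-- The point `[1:0]` of the projective line. -/
noncomputable def ptZero (F : Type*) [Field F] : P1 F :=
  Projectivization.mk F (1, 0) (fun h => one_ne_zero (congrArg Prod.fst h))

/-- The point `[0:1]` of the projective line. -/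
noncomputable def ptInf (F : Type*) [Field F] : P1 F :=
  Projectivization.mk F (0, 1) (fun h => one_ne_zero (congrArg Prod.snd h))

/-- The point `[1:1]` of the projective line. -/
noncomputable def ptOne (F : Type*) [Field F] : P1 F :=
  Projectivization.mk F (1, 1) (fun h => one_ne_zero (congrArg Prod.fst h))

/-- `p = (i, j)` is a diagonal of the convex `(m+1)`-gon with vertices `0, …, m`:
`i < j`, the two vertices are not consecutive, and `(0, m)` is excluded (it is a side). -/
def IsDiag (m : ℕ) (p : ℕ × ℕ) : Prop :=
  p.1 + 2 ≤ p.2 ∧ p.2 ≤ m ∧ ¬(p.1 = 0 ∧ p.2 = m)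

instance (m : ℕ) (p : ℕ × ℕ) : Decidable (IsDiag m p) := by unfold IsDiag; infer_instance

/-- The type of diagonals of the convex `(m+1)`-gon. -/
abbrev Diagonal (m : ℕ) := {p : ℕ × ℕ // IsDiag m p}

/-- Two diagonals cross in the interior of the polygon. -/
def Crossing {m : ℕ} (d e : Diagonal m) : Prop :=
  (d.val.1 < e.val.1 ∧ e.val.1 < d.val.2 ∧ d.val.2 < e.val.2) ∨
  (e.val.1 < d.val.1 ∧ d.val.1 < e.val.2 ∧ e.val.2 < d.val.2)

/-- A triangulation of the convex `(m+1)`-gon: a maximal set of pairwise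
non-crossing diagonals (maximality = having `(m+1) - 3` diagonals). -/
structure Triangulation (m : ℕ) where
  diags : Finset (Diagonal m)
  noncross : ∀ d ∈ diags, ∀ e ∈ diags, ¬ Crossing d e
  card_eq : diags.card = m - 2

/-- `y` takes distinct values on the endpoints of every diagonal of `T`
(i.e. `y` lies in the cluster torus of `T`). -/
def ProperDiags {F : Type*} [Field F] {m : ℕ} (T : Triangulation m) (y : ℕ → P1 F) : Prop :=
  ∀ d ∈ T.diags, y d.val.1 ≠ y d.val.2

/-- `c` is a proper coloring of the full graph of the triangulation `T`
(sides of the polygon together with the diagonals of `T`). -/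
def ProperGraph {F : Type*} [Field F] {m : ℕ} (T : Triangulation m) (c : ℕ → P1 F) : Prop :=
  (∀ i < m, c i ≠ c (i + 1)) ∧ c m ≠ c 0 ∧ ProperDiags T c

/-- `y` is a point of `X_F(m)`: `y 0 = [1:0]`, `y m = [0:1]`, consecutive entries distinct. -/
def XCond (F : Type*) [Field F] (m : ℕ) (y : ℕ → P1 F) : Prop :=
  y 0 = ptZero F ∧ y m = ptInf F ∧ ∀ i < m, y i ≠ y (i + 1)

/-- `y` is the alternating sequence `([1:0], [0:1], [1:0], …)` on `0, …, m`. -/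
def IsAltSeq (F : Type*) [Field F] (m : ℕ) (y : ℕ → P1 F) : Prop :=
  ∀ i ≤ m, y i = if i % 2 = 0 then ptZero F else ptInf F

/-- The diagonal `d` is valid for the point `y`: its endpoints have distinct labels and
on each of the two sub-polygons determined by `d` the labels take at least three values. -/
def ValidDiag (F : Type*) [Field F] (m : ℕ) (y : ℕ → P1 F) (d : Diagonal m) : Prop :=
  y d.val.1 ≠ y d.val.2 ∧
  3 ≤ (y '' (Set.Icc d.val.1 d.val.2)).ncard ∧
  3 ≤ (y '' (Set.Icc 0 d.val.1 ∪ Set.Icc d.val.2 m)).ncard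

/-- `T'` is obtained from `T` by removing the diagonals `old` and adding the diagonals `new`. -/
def SwapMove {m : ℕ} (T T' : Triangulation m) (old new : Finset (Diagonal m)) : Prop :=
  old ⊆ T.diags ∧ T'.diags = (T.diags \ old) ∪ new

/-- Zig-zag hexagonal move: inside a hexagonal sub-polygon with vertices
`v 0 < ⋯ < v 5`, replace the zig-zag `{15, 35, 36}` by the zig-zag `{24, 26, 46}`
(in the labels `1, …, 6` of the hexagon). -/
def ZigZagMoveOne {m : ℕ} (T T' : Triangulation m) : Prop :=
  ∃ v : Fin 6 → ℕ, StrictMono v ∧ v 5 ≤ m ∧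
    ∃ (h1 : IsDiag m (v 0, v 4)) (h2 : IsDiag m (v 2, v 4)) (h3 : IsDiag m (v 2, v 5))
      (h4 : IsDiag m (v 1, v 3)) (h5 : IsDiag m (v 1, v 5)) (h6 : IsDiag m (v 3, v 5)),
      SwapMove T T' {⟨(v 0, v 4), h1⟩, ⟨(v 2, v 4), h2⟩, ⟨(v 2, v 5), h3⟩}
        {⟨(v 1, v 3), h4⟩, ⟨(v 1, v 5), h5⟩, ⟨(v 3, v 5), h6⟩}

/-- Inscribed-triangle hexagonal move: inside a hexagonal sub-polygon with vertices
`v 0 < ⋯ < v 5`, replace the inscribed triangle `{13, 35, 51}` by `{24, 46, 62}`. -/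
def InscribedMoveOne {m : ℕ} (T T' : Triangulation m) : Prop :=
  ∃ v : Fin 6 → ℕ, StrictMono v ∧ v 5 ≤ m ∧
    ∃ (h1 : IsDiag m (v 0, v 2)) (h2 : IsDiag m (v 2, v 4)) (h3 : IsDiag m (v 0, v 4))
      (h4 : IsDiag m (v 1, v 3)) (h5 : IsDiag m (v 3, v 5)) (h6 : IsDiag m (v 1, v 5)),
      SwapMove T T' {⟨(v 0, v 2), h1⟩, ⟨(v 2, v 4), h2⟩, ⟨(v 0, v 4), h3⟩}
        {⟨(v 1, v 3), h4⟩, ⟨(v 3, v 5), h5⟩, ⟨(v 1, v 5), h6⟩}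

/-- A hexagonal move (in either direction). -/
def HexMove {m : ℕ} (T T' : Triangulation m) : Prop :=
  ZigZagMoveOne T T' ∨ ZigZagMoveOne T' T ∨ InscribedMoveOne T T' ∨ InscribedMoveOne T' T

/-- The restrictions to `{0, …, m}` of the points of `X'_F(m)`
(points of `X_F(m)` distinct from the alternating sequence). -/
def XsetFin (F : Type*) [Field F] (m : ℕ) : Set (Fin (m + 1) → P1 F) :=
  {z | ∃ y : ℕ → P1 F, XCond F m y ∧ ¬ IsAltSeq F m y ∧ ∀ i : Fin (m + 1), z i = y i.val}


/-! ### Auxiliary material for the proof -/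

section P1Basics

variable {F : Type*} [Field F]

lemma ptZero_ne_ptInf : ptZero F ≠ ptInf F := by
  intro h
  rw [ptZero, ptInf, Projectivization.mk_eq_mk_iff] at h
  obtain ⟨a, ha⟩ := h
  have := congrArg Prod.fst ha
  simp [Prod.smul_def] at this

lemma ptZero_ne_ptOne : ptZero F ≠ ptOne F := by
  intro h
  rw [ptZero, ptOne, Projectivization.mk_eq_mk_iff] at h
  obtain ⟨a, ha⟩ := h
  have h1 := congrArg Prod.fst ha
  have h2 := congrArg Prod.snd ha
  simp [Prod.smul_def] at h1 h2
  rw [h1] at h2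
  simp at h2

lemma ptInf_ne_ptOne : ptInf F ≠ ptOne F := by
  intro h
  rw [ptInf, ptOne, Projectivization.mk_eq_mk_iff] at h
  obtain ⟨a, ha⟩ := h
  have h1 := congrArg Prod.fst ha
  simp [Prod.smul_def, Units.smul_def] at h1

lemma P1two_cases (p : P1 (ZMod 2)) :
    p = ptZero (ZMod 2) ∨ p = ptInf (ZMod 2) ∨ p = ptOne (ZMod 2) := by
  induction p using Projectivization.ind with
  | h v hv =>
    obtain ⟨x, y⟩ := v
    fin_cases x <;> fin_cases y <;>
      first
      | (exact absurd rfl hv)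
      | (left; rfl)
      | (right; left; rfl)
      | (right; right; rfl)

lemma pigeon {x y z w : P1 (ZMod 2)} (hxy : x ≠ y) (hzx : z ≠ x) (hzy : z ≠ y)
    (hwx : w ≠ x) (hwy : w ≠ y) : z = w := by
  have h0I := @ptZero_ne_ptInf (ZMod 2) _
  have h01 := @ptZero_ne_ptOne (ZMod 2) _
  have hI1 := @ptInf_ne_ptOne (ZMod 2) _
  rcases P1two_cases x with rfl | rfl | rfl <;>
    rcases P1two_cases y with rfl | rfl | rfl <;>
    rcases P1two_cases z with rfl | rfl | rfl <;>
    rcases P1two_cases w with rfl | rfl | rfl <;>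
    simp_all

open scoped Classical in
/-- The embedding of `P¹(F₂)` into `P¹(F)`. -/
noncomputable def iota (F : Type*) [Field F] : P1 (ZMod 2) → P1 F := fun p =>
  if p = ptZero (ZMod 2) then ptZero F else if p = ptInf (ZMod 2) then ptInf F else ptOne F

lemma iota_zero : iota F (ptZero (ZMod 2)) = ptZero F := by simp [iota]

lemma iota_inf : iota F (ptInf (ZMod 2)) = ptInf F := by
  simp [iota]
  intro h
  exact absurd h.symm (@ptZero_ne_ptInf (ZMod 2) _)

lemma iota_one : iota F (ptOne (ZMod 2)) = ptOne F := by
  rw [iota, if_neg (fun h => (@ptZero_ne_ptOne (ZMod 2) _) h.symm),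
    if_neg (fun h => (@ptInf_ne_ptOne (ZMod 2) _) h.symm)]

lemma iota_eq_zero {p : P1 (ZMod 2)} : iota F p = ptZero F ↔ p = ptZero (ZMod 2) := by
  constructor
  · intro h
    rcases P1two_cases p with rfl | rfl | rfl
    · rfl
    · rw [iota_inf] at h
      exact absurd h.symm (@ptZero_ne_ptInf F _)
    · rw [iota_one] at h
      exact absurd h.symm (@ptZero_ne_ptOne F _)
  · rintro rfl
    exact iota_zero

lemma iota_eq_inf {p : P1 (ZMod 2)} : iota F p = ptInf F ↔ p = ptInf (ZMod 2) := by
  constructor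
  · intro h
    rcases P1two_cases p with rfl | rfl | rfl
    · rw [iota_zero] at h
      exact absurd h (@ptZero_ne_ptInf F _)
    · rfl
    · rw [iota_one] at h
      exact absurd h.symm (@ptInf_ne_ptOne F _)
  · rintro rfl
    exact iota_inf

lemma iota_inj : Function.Injective (iota F) := by
  intro p q h
  have h0I := @ptZero_ne_ptInf F _
  have h01 := @ptZero_ne_ptOne F _
  have hI1 := @ptInf_ne_ptOne F _
  rcases P1two_cases p with rfl | rfl | rfl <;> rcases P1two_cases q with rfl | rfl | rfl <;>
    simp only [iota_zero, iota_inf, iota_one] at h <;>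
    first
    | rfl
    | (exact absurd h h0I)
    | (exact absurd h h01)
    | (exact absurd h hI1)
    | (exact absurd h.symm h0I)
    | (exact absurd h.symm h01)
    | (exact absurd h.symm hI1)

end P1Basics

section Counting

/-- Upper bound: a pairwise noncrossing family of diagonals strictly inside `[a, b]`
has at most `b - a - 2` elements. -/
lemma boundA : ∀ (n : ℕ) (s : Finset (ℕ × ℕ)) (a b : ℕ), b - a ≤ n →
    (∀ p ∈ s, p.1 + 2 ≤ p.2) →
    (∀ p ∈ s, ∀ q ∈ s,
      ¬((p.1 < q.1 ∧ q.1 < p.2 ∧ p.2 < q.2) ∨ (q.1 < p.1 ∧ p.1 < q.2 ∧ q.2 < p.2))) →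
    (∀ p ∈ s, a ≤ p.1 ∧ p.2 ≤ b ∧ p ≠ (a, b)) → s.card ≤ b - a - 2 := by
  intro n
  induction n using Nat.strong_induction_on with
  | _ n ih =>
    intro s a b hn hdg hnc hin
    rcases s.eq_empty_or_nonempty with rfl | hne
    · simp
    obtain ⟨d1, hd1s, hmin'⟩ := s.exists_min_image Prod.fst hne
    obtain ⟨d, hdt, hmax'⟩ :=
      (s.filter (fun p => p.1 = d1.1)).exists_max_image Prod.snd
        ⟨d1, Finset.mem_filter.mpr ⟨hd1s, rfl⟩⟩
    have hds : d ∈ s := (Finset.mem_filter.mp hdt).1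
    have hdi : d.1 = d1.1 := (Finset.mem_filter.mp hdt).2
    obtain ⟨i, j⟩ := d
    simp only at hdi
    subst hdi
    set i := d1.1 with hi
    have hmin : ∀ p ∈ s, i ≤ p.1 := hmin'
    have hmax : ∀ p ∈ s, p.1 = i → p.2 ≤ j := fun p hp hpi =>
      hmax' p (Finset.mem_filter.mpr ⟨hp, hpi⟩)
    have hai : a ≤ i := (hin _ hds).1
    have hjb : j ≤ b := (hin _ hds).2.1
    have hij : i + 2 ≤ j := hdg _ hds
    have hnab : ¬(i = a ∧ j = b) := fun ⟨h1, h2⟩ => (hin _ hds).2.2 (by rw [h1, h2])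
    set s1 := s.filter (fun p => i ≤ p.1 ∧ p.2 ≤ j ∧ p ≠ (i, j)) with hs1
    set s2 := s.filter (fun p => j ≤ p.1 ∧ p.2 ≤ b ∧ p ≠ (j, b)) with hs2
    have hsplit : ∀ p ∈ s, p ≠ (i, j) → p ≠ (j, b) → p ∈ s1 ∪ s2 := by
      intro p hp h1 h2
      have hip := hmin p hp
      have hpb := (hin p hp).2.1
      rcases eq_or_lt_of_le hip with he | hlt
      · exact Finset.mem_union_left _ (Finset.mem_filter.mpr
          ⟨hp, hip, hmax p hp he.symm, h1⟩)
      · have hnc' := hnc _ hds p hp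
        simp only [not_or, not_and] at hnc'
        by_cases hq : p.2 ≤ j
        · exact Finset.mem_union_left _ (Finset.mem_filter.mpr ⟨hp, le_of_lt hlt, hq, h1⟩)
        · have hpj : j ≤ p.1 := by
            by_contra hpj
            exact hnc'.1 hlt (by omega) (by omega)
          exact Finset.mem_union_right _ (Finset.mem_filter.mpr ⟨hp, hpj, hpb, h2⟩)
    have hcard1 : s1.card ≤ j - i - 2 :=
      ih (n - 1) (by omega) s1 i j (by omega)
        (fun p hp => hdg p (Finset.mem_filter.mp hp).1)
        (fun p hp q hq => hnc p (Finset.mem_filter.mp hp).1 q (Finset.mem_filter.mp hq).1)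
        (fun p hp => (Finset.mem_filter.mp hp).2)
    have hcard2 : s2.card ≤ b - j - 2 :=
      ih (n - 1) (by omega) s2 j b (by omega)
        (fun p hp => hdg p (Finset.mem_filter.mp hp).1)
        (fun p hp q hq => hnc p (Finset.mem_filter.mp hp).1 q (Finset.mem_filter.mp hq).1)
        (fun p hp => (Finset.mem_filter.mp hp).2)
    by_cases hjbs : (j, b) ∈ s
    · have hjb2 : j + 2 ≤ b := hdg _ hjbs
      have hsub : s ⊆ insert (i, j) (insert (j, b) (s1 ∪ s2)) := by
        intro p hp
        by_cases h1 : p = (i, j)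
        · exact Finset.mem_insert.mpr (Or.inl h1)
        by_cases h2 : p = (j, b)
        · exact Finset.mem_insert.mpr (Or.inr (Finset.mem_insert.mpr (Or.inl h2)))
        exact Finset.mem_insert.mpr (Or.inr (Finset.mem_insert.mpr (Or.inr
          (hsplit p hp h1 h2))))
      have hc := (Finset.card_le_card hsub).trans
        ((Finset.card_insert_le _ _).trans (Nat.succ_le_succ
          ((Finset.card_insert_le _ _).trans (Nat.succ_le_succ (Finset.card_union_le _ _)))))
      omega
    · have hsub : s ⊆ insert (i, j) (s1 ∪ s2) := by
        intro p hp
        by_cases h1 : p = (i, j)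
        · exact Finset.mem_insert.mpr (Or.inl h1)
        have h2 : p ≠ (j, b) := fun h => hjbs (h ▸ hp)
        exact Finset.mem_insert.mpr (Or.inr (hsplit p hp h1 h2))
      have hc := (Finset.card_le_card hsub).trans
        ((Finset.card_insert_le _ _).trans (Nat.succ_le_succ (Finset.card_union_le _ _)))
      omega

variable {m : ℕ}

/-- Diagonals of `T` strictly inside the segment `[a, b]`. -/
def Dset (T : Triangulation m) (a b : ℕ) : Finset (Diagonal m) :=
  T.diags.filter (fun d => a ≤ d.val.1 ∧ d.val.2 ≤ b ∧ d.val ≠ (a, b))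

/-- `(a, k)` is an edge of the triangulated polygon: a side or a diagonal of `T`. -/
def EdgeIn (T : Triangulation m) (a k : ℕ) : Prop :=
  k = a + 1 ∨ ∃ h : IsDiag m (a, k), (⟨(a, k), h⟩ : Diagonal m) ∈ T.diags

lemma boundA' (T : Triangulation m) (s : Finset (Diagonal m)) (hs : s ⊆ T.diags)
    (a b : ℕ) (hin : ∀ d ∈ s, a ≤ d.val.1 ∧ d.val.2 ≤ b ∧ d.val ≠ (a, b)) :
    s.card ≤ b - a - 2 := by
  have hinj : Set.InjOn Subtype.val (s : Set (Diagonal m)) := fun x _ y _ h => Subtype.ext h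
  rw [← Finset.card_image_of_injOn hinj]
  refine boundA (b - a) _ a b le_rfl ?_ ?_ ?_
  · intro p hp
    obtain ⟨d, hd, rfl⟩ := Finset.mem_image.mp hp
    exact d.2.1
  · intro p hp q hq
    obtain ⟨d, hd, rfl⟩ := Finset.mem_image.mp hp
    obtain ⟨e, he, rfl⟩ := Finset.mem_image.mp hq
    exact T.noncross d (hs hd) e (hs he)
  · intro p hp
    obtain ⟨d, hd, rfl⟩ := Finset.mem_image.mp hp
    exact hin d hd

lemma Dset_subset (T : Triangulation m) (a b : ℕ) : Dset T a b ⊆ T.diags :=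
  Finset.filter_subset _ _

lemma Dset_card_le (T : Triangulation m) (a b : ℕ) : (Dset T a b).card ≤ b - a - 2 :=
  boundA' T _ (Dset_subset T a b) a b (fun d hd => (Finset.mem_filter.mp hd).2)

lemma val_filter_card (T : Triangulation m) (a k : ℕ) :
    (T.diags.filter (fun d => d.val = (a, k))).card ≤ 1 := by
  refine Finset.card_le_one.mpr (fun x hx y hy => Subtype.ext ?_)
  rw [(Finset.mem_filter.mp hx).2, (Finset.mem_filter.mp hy).2]

lemma val_filter_gap (T : Triangulation m) (a k : ℕ)
    (h : k < a + 2) : (T.diags.filter (fun d => d.val = (a, k))).card = 0 := by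
  rw [Finset.card_eq_zero, Finset.filter_eq_empty_iff]
  intro d hd hval
  have := d.2.1
  rw [hval] at this
  omega

lemma ne_val {α : Type*} {P : α → Prop} {x y : {a // P a}} (h : x ≠ y) : x.val ≠ y.val :=
  fun hv => h (Subtype.ext hv)

/-- Every edge of a triangulation with enough diagonals inside it admits an apex:
a vertex joined to both endpoints, splitting the count. -/
lemma apex (T : Triangulation m) (a b : ℕ) (hab2 : a + 2 ≤ b)
    (hcount : b - a - 2 ≤ (Dset T a b).card) :
    ∃ k, a < k ∧ k < b ∧ EdgeIn T a k ∧ EdgeIn T k b ∧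
      k - a - 2 ≤ (Dset T a k).card ∧ b - k - 2 ≤ (Dset T k b).card := by
  rcases eq_or_lt_of_le hab2 with hb2 | hb3
  · exact ⟨a + 1, by omega, by omega, Or.inl rfl, Or.inl (by omega), by omega, by omega⟩
  have hne : (Dset T a b).Nonempty := by
    rw [← Finset.card_pos]; omega
  obtain ⟨d0, hd0mem, hd0max⟩ :=
    Finset.exists_max_image (Dset T a b) (fun d => d.val.2 - d.val.1) hne
  obtain ⟨⟨i, j⟩, hdiag⟩ := d0
  obtain ⟨hd0T, hai, hjb, hd0ne⟩ := Finset.mem_filter.mp hd0mem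
  simp only at hai hjb hd0ne hd0max
  have hij : i + 2 ≤ j := hdiag.1
  have hnab : ¬(i = a ∧ j = b) := fun ⟨h1, h2⟩ => hd0ne (by rw [h1, h2])
  by_cases hjb' : j = b
  · -- apex k = i ; `b` is substituted by `j`
    subst hjb'
    have hia : a < i := by omega
    have hDai := Dset_card_le T a i
    have hDij := Dset_card_le T i j
    have hEai := val_filter_card T a i
    have hsub : Dset T a j ⊆ insert ⟨(i, j), hdiag⟩
        ((Dset T a i ∪ T.diags.filter (fun d => d.val = (a, i))) ∪ Dset T i j) := by
      intro d hd
      rw [Finset.mem_insert]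
      by_cases hdd : d = ⟨(i, j), hdiag⟩
      · exact Or.inl hdd
      right
      obtain ⟨hdT, hap, hqb, hdne⟩ := Finset.mem_filter.mp hd
      have hval := ne_val hdd
      have hnc := T.noncross _ hd0T d hdT
      simp only [Crossing, not_or, not_and] at hnc
      have hlen := hd0max d hd
      by_cases hpi : i ≤ d.val.1
      · refine Finset.mem_union_right _ (Finset.mem_filter.mpr ⟨hdT, hpi, hqb, ?_⟩)
        simpa using hval
      · push_neg at hpi
        have hqi : d.val.2 ≤ i := by
          rcases Nat.lt_or_ge d.val.2 j with h | h
          · by_contra hqi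
            exact hnc.2 hpi (by omega) h
          · exfalso
            have hq2 : d.val.2 = j := le_antisymm hqb h
            have := d.2.1
            omega
        refine Finset.mem_union_left _ ?_
        by_cases hda : d.val = (a, i)
        · exact Finset.mem_union_right _ (Finset.mem_filter.mpr ⟨hdT, hda⟩)
        · exact Finset.mem_union_left _ (Finset.mem_filter.mpr ⟨hdT, hap, hqi, hda⟩)
    have hc := (Finset.card_le_card hsub).trans
      ((Finset.card_insert_le _ _).trans (Nat.succ_le_succ
        ((Finset.card_union_le _ _).trans (Nat.add_le_add_right (Finset.card_union_le _ _) _))))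
    have hEgap : i < a + 2 → (T.diags.filter (fun d => d.val = (a, i))).card = 0 :=
      val_filter_gap T a i
    have hEdge : EdgeIn T a i := by
      by_cases hia1 : i = a + 1
      · exact Or.inl hia1
      · have hEne : (T.diags.filter (fun d => d.val = (a, i))).card ≠ 0 := by
          intro h0
          omega
        obtain ⟨e, he⟩ := Finset.card_ne_zero.mp hEne
        obtain ⟨heT, heval⟩ := Finset.mem_filter.mp he
        refine Or.inr ⟨heval ▸ e.2, ?_⟩
        have : (⟨(a, i), heval ▸ e.2⟩ : Diagonal m) = e := Subtype.ext heval.symm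
        rw [this]; exact heT
    exact ⟨i, hia, by omega, hEdge, Or.inr ⟨hdiag, hd0T⟩, by omega, by omega⟩
  · have hjb2 : j < b := by omega
    by_cases hia' : i = a
    · -- apex k = j ; `a` is substituted by `i`
      subst hia'
      have hDjb := Dset_card_le T j b
      have hDij := Dset_card_le T i j
      have hEjb := val_filter_card T j b
      have hsub : Dset T i b ⊆ insert ⟨(i, j), hdiag⟩
          ((Dset T j b ∪ T.diags.filter (fun d => d.val = (j, b))) ∪ Dset T i j) := by
        intro d hd
        rw [Finset.mem_insert]
        by_cases hdd : d = ⟨(i, j), hdiag⟩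
        · exact Or.inl hdd
        right
        obtain ⟨hdT, hap, hqb, hdne⟩ := Finset.mem_filter.mp hd
        have hval := ne_val hdd
        have hnc := T.noncross _ hd0T d hdT
        simp only [Crossing, not_or, not_and] at hnc
        have hlen := hd0max d hd
        by_cases hqj : d.val.2 ≤ j
        · refine Finset.mem_union_right _ (Finset.mem_filter.mpr ⟨hdT, hap, hqj, ?_⟩)
          simpa using hval
        · push_neg at hqj
          have hp : j ≤ d.val.1 := by
            by_contra hpj
            push_neg at hpj
            rcases Nat.lt_or_ge i d.val.1 with h2 | h2
            · exact hnc.1 h2 hpj hqj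
            · have hp1 : d.val.1 = i := by omega
              have := d.2.1
              omega
          refine Finset.mem_union_left _ ?_
          by_cases hda : d.val = (j, b)
          · exact Finset.mem_union_right _ (Finset.mem_filter.mpr ⟨hdT, hda⟩)
          · exact Finset.mem_union_left _ (Finset.mem_filter.mpr ⟨hdT, hp, hqb, hda⟩)
      have hc := (Finset.card_le_card hsub).trans
        ((Finset.card_insert_le _ _).trans (Nat.succ_le_succ
          ((Finset.card_union_le _ _).trans (Nat.add_le_add_right (Finset.card_union_le _ _) _))))
      have hEgap : b < j + 2 → (T.diags.filter (fun d => d.val = (j, b))).card = 0 :=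
        val_filter_gap T j b
      have hEdge : EdgeIn T j b := by
        by_cases hjb1 : b = j + 1
        · exact Or.inl hjb1
        · have hEne : (T.diags.filter (fun d => d.val = (j, b))).card ≠ 0 := by
            intro h0
            omega
          obtain ⟨e, he⟩ := Finset.card_ne_zero.mp hEne
          obtain ⟨heT, heval⟩ := Finset.mem_filter.mp he
          refine Or.inr ⟨heval ▸ e.2, ?_⟩
          have : (⟨(j, b), heval ▸ e.2⟩ : Diagonal m) = e := Subtype.ext heval.symm
          rw [this]; exact heT
      exact ⟨j, by omega, hjb2, Or.inr ⟨hdiag, hd0T⟩, hEdge, by omega, by omega⟩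
    · exfalso
      have hia : a < i := by omega
      have hDai := Dset_card_le T a i
      have hDij := Dset_card_le T i j
      have hDjb := Dset_card_le T j b
      have hEai := val_filter_card T a i
      have hEjb := val_filter_card T j b
      have hsub : Dset T a b ⊆ insert ⟨(i, j), hdiag⟩
          (((Dset T a i ∪ T.diags.filter (fun d => d.val = (a, i))) ∪
            (Dset T j b ∪ T.diags.filter (fun d => d.val = (j, b)))) ∪ Dset T i j) := by
        intro d hd
        rw [Finset.mem_insert]
        by_cases hdd : d = ⟨(i, j), hdiag⟩
        · exact Or.inl hdd
        right
        obtain ⟨hdT, hap, hqb, hdne⟩ := Finset.mem_filter.mp hd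
        have hval := ne_val hdd
        have hnc := T.noncross _ hd0T d hdT
        simp only [Crossing, not_or, not_and] at hnc
        have hlen := hd0max d hd
        have hgap := d.2.1
        by_cases hpi : d.val.1 < i
        · have hqi : d.val.2 ≤ i := by
            by_contra hqi
            push_neg at hqi
            have := hnc.2 hpi hqi
            omega
          refine Finset.mem_union_left _ (Finset.mem_union_left _ ?_)
          by_cases hda : d.val = (a, i)
          · exact Finset.mem_union_right _ (Finset.mem_filter.mpr ⟨hdT, hda⟩)
          · exact Finset.mem_union_left _ (Finset.mem_filter.mpr ⟨hdT, hap, hqi, hda⟩)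
        · push_neg at hpi
          by_cases hqj : d.val.2 ≤ j
          · refine Finset.mem_union_right _ (Finset.mem_filter.mpr ⟨hdT, hpi, hqj, ?_⟩)
            simpa using hval
          · push_neg at hqj
            have hpj : j ≤ d.val.1 := by
              by_contra hpj
              push_neg at hpj
              rcases Nat.lt_or_ge i d.val.1 with h2 | h2
              · exact hnc.1 h2 hpj hqj
              · omega
            refine Finset.mem_union_left _ (Finset.mem_union_right _ ?_)
            by_cases hda : d.val = (j, b)
            · exact Finset.mem_union_right _ (Finset.mem_filter.mpr ⟨hdT, hda⟩)
            · exact Finset.mem_union_left _ (Finset.mem_filter.mpr ⟨hdT, hpj, hqb, hda⟩)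
      have hc := (Finset.card_le_card hsub).trans
        ((Finset.card_insert_le _ _).trans (Nat.succ_le_succ
          ((Finset.card_union_le _ _).trans (Nat.add_le_add_right
            ((Finset.card_union_le _ _).trans (Nat.add_le_add
              (Finset.card_union_le _ _) (Finset.card_union_le _ _))) _))))
      have hEgap1 : i < a + 2 → (T.diags.filter (fun d => d.val = (a, i))).card = 0 :=
        val_filter_gap T a i
      have hEgap2 : b < j + 2 → (T.diags.filter (fun d => d.val = (j, b))).card = 0 :=
        val_filter_gap T j b
      omega

end Counting

section Unique

variable {m : ℕ}

lemma edge_ne {F : Type*} [Field F] {T : Triangulation m} {c : ℕ → P1 F}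
    (hside : ∀ i < m, c i ≠ c (i + 1)) (hdiag : ProperDiags T c)
    {a k : ℕ} (h : EdgeIn T a k) (hk : k ≤ m) : c a ≠ c k := by
  rcases h with h | ⟨hd, hmem⟩
  · subst h
    exact hside a (by omega)
  · exact hdiag _ hmem

lemma unique_aux (T : Triangulation m) (c c' : ℕ → P1 (ZMod 2))
    (hs : ∀ i < m, c i ≠ c (i + 1)) (hs' : ∀ i < m, c' i ≠ c' (i + 1))
    (hd : ProperDiags T c) (hd' : ProperDiags T c') :
    ∀ n a b, b - a ≤ n → b ≤ m → c a = c' a → c b = c' b → c a ≠ c b →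
      b - a - 2 ≤ (Dset T a b).card → ∀ i, a ≤ i → i ≤ b → c i = c' i := by
  intro n
  induction n using Nat.strong_induction_on with
  | _ n ih =>
    intro a b hn hbm hca hcb hab hcount i hai hib
    by_cases hsmall : b ≤ a + 1
    · rcases (by omega : i = a ∨ i = b) with rfl | rfl
      · exact hca
      · exact hcb
    · obtain ⟨k, hak, hkb, hE1, hE2, hc1, hc2⟩ := apex T a b (by omega) hcount
      have hkm : k ≤ m := by omega
      have h1 : c a ≠ c k := edge_ne hs hd hE1 hkm
      have h2 : c k ≠ c b := edge_ne hs hd hE2 hbm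
      have h1' : c' a ≠ c' k := edge_ne hs' hd' hE1 hkm
      have h2' : c' k ≠ c' b := edge_ne hs' hd' hE2 hbm
      have hck : c k = c' k := by
        refine pigeon hab h1.symm h2 ?_ ?_
        · rw [hca]; exact h1'.symm
        · rw [hcb]; exact h2'
      rcases le_or_gt i k with hik | hki
      · exact ih (n - 1) (by omega) a k (by omega) hkm hca hck h1 hc1 i hai hik
      · exact ih (n - 1) (by omega) k b (by omega) hbm hck hcb h2 hc2 i (by omega) hib

lemma unique_top (T : Triangulation m) (c c' : ℕ → P1 (ZMod 2))
    (hXc : XCond (ZMod 2) m c) (hXc' : XCond (ZMod 2) m c')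
    (hd : ProperDiags T c) (hd' : ProperDiags T c') : ∀ i ≤ m, c i = c' i := by
  have hDfull : Dset T 0 m = T.diags := by
    apply Finset.filter_true_of_mem
    intro d hdm
    exact ⟨Nat.zero_le _, d.2.2.1,
      fun h => d.2.2.2 ⟨congrArg Prod.fst h, congrArg Prod.snd h⟩⟩
  intro i him
  refine unique_aux T c c' hXc.2.2 hXc'.2.2 hd hd' m 0 m (by omega) le_rfl ?_ ?_ ?_ ?_
    i (Nat.zero_le _) him
  · rw [hXc.1, hXc'.1]
  · rw [hXc.2.1, hXc'.2.1]
  · rw [hXc.1, hXc.2.1]; exact ptZero_ne_ptInf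
  · rw [hDfull, T.card_eq]
    omega

end Unique

/-- The extension of a point of `X'_{F₂}(m)` restricted to `{0, …, m}` to a sequence
with values in `P¹(F)`. -/
noncomputable def Yext (F : Type*) [Field F] (m : ℕ) (z : Fin (m + 1) → P1 (ZMod 2)) :
    ℕ → P1 F :=
  fun n => if h : n < m + 1 then iota F (z ⟨n, h⟩) else ptZero F

theorem stmt15 (F : Type*) [Field F] (m : ℕ) (S : Set (Triangulation m))
    (hcov : ∀ y : ℕ → P1 F, XCond F m y → ¬ IsAltSeq F m y →
      ∃ T ∈ S, ProperDiags T y) :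
    (XsetFin (ZMod 2) m).ncard ≤ S.ncard := by
  classical
  haveI : Finite (Diagonal m) := by
    refine Finite.of_injective
      (fun d => ((⟨d.val.1, by have h1 := d.2.1; have h2 := d.2.2.1; omega⟩ : Fin (m + 1)),
        (⟨d.val.2, by have h2 := d.2.2.1; omega⟩ : Fin (m + 1)))) ?_
    intro d e h
    simp only [Prod.mk.injEq, Fin.mk.injEq] at h
    exact Subtype.ext (Prod.ext h.1 h.2)
  haveI := Fintype.ofFinite (Diagonal m)
  haveI : Finite (Triangulation m) := by
    refine Finite.of_injective (fun T => T.diags) ?_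
    intro T T' h
    cases T; cases T'; simpa using h
  by_cases hXe : XsetFin (ZMod 2) m = ∅
  · simp [hXe]
  -- basic facts about `Yext`
  have hY : ∀ z ∈ XsetFin (ZMod 2) m, ∀ y : ℕ → P1 (ZMod 2),
      (∀ i : Fin (m + 1), z i = y i.val) → ∀ n ≤ m, Yext F m z n = iota F (y n) := by
    intro z _ y hw n hn
    rw [Yext, dif_pos (by omega : n < m + 1), hw ⟨n, by omega⟩]
  have hYx : ∀ z ∈ XsetFin (ZMod 2) m,
      XCond F m (Yext F m z) ∧ ¬ IsAltSeq F m (Yext F m z) := by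
    intro z hz
    obtain ⟨y, hXy, hAy, hw⟩ := hz
    have hY' := hY z ⟨y, hXy, hAy, hw⟩ y hw
    constructor
    · refine ⟨?_, ?_, ?_⟩
      · rw [hY' 0 (Nat.zero_le _), hXy.1, iota_zero]
      · rw [hY' m le_rfl, hXy.2.1, iota_inf]
      · intro i him
        rw [hY' i (by omega), hY' (i + 1) (by omega)]
        exact fun h => hXy.2.2 i him (iota_inj h)
    · intro halt
      apply hAy
      intro i him
      have hh := halt i him
      rw [hY' i him] at hh
      by_cases hev : i % 2 = 0
      · rw [if_pos hev] at hh ⊢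
        exact iota_eq_zero.mp hh
      · rw [if_neg hev] at hh ⊢
        exact iota_eq_inf.mp hh
  have key : ∀ z ∈ XsetFin (ZMod 2) m, ∃ T ∈ S, ProperDiags T (Yext F m z) :=
    fun z hz => hcov _ (hYx z hz).1 (hYx z hz).2
  obtain ⟨z0, hz0⟩ := Set.nonempty_iff_ne_empty.mpr hXe
  obtain ⟨T0, hT0S, -⟩ := key z0 hz0
  haveI : Nonempty (Triangulation m) := ⟨T0⟩
  refine Set.ncard_le_ncard_of_injOn
    (fun z => if h : ∃ T ∈ S, ProperDiags T (Yext F m z) then h.choose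
      else Classical.arbitrary _) ?_ ?_ (Set.toFinite S)
  · intro z hz
    simp only [dif_pos (key z hz)]
    exact (key z hz).choose_spec.1
  · intro z hz z' hz' hf
    simp only [dif_pos (key z hz), dif_pos (key z' hz')] at hf
    have hP : ProperDiags (key z' hz').choose (Yext F m z) := by
      rw [← hf]; exact (key z hz).choose_spec.2
    have hP' : ProperDiags (key z' hz').choose (Yext F m z') := (key z' hz').choose_spec.2
    have hzc := hz
    have hzc' := hz'
    obtain ⟨y, hXy, hAy, hw⟩ := hzc
    obtain ⟨y', hXy', hAy', hw'⟩ := hzc'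
    have hYz := hY z hz y hw
    have hYz' := hY z' hz' y' hw'
    set T := (key z' hz').choose with hT
    have hPy : ProperDiags T y := by
      intro d hdm
      have hb1 := d.2.1
      have hb2 := d.2.2.1
      have h := hP d hdm
      rw [hYz d.val.1 (by omega), hYz d.val.2 (by omega)] at h
      exact fun he => h (congrArg (iota F) he)
    have hPy' : ProperDiags T y' := by
      intro d hdm
      have hb1 := d.2.1
      have hb2 := d.2.2.1
      have h := hP' d hdm
      rw [hYz' d.val.1 (by omega), hYz' d.val.2 (by omega)] at h
      exact fun he => h (congrArg (iota F) he)
    have huniq := unique_top T y y' hXy hXy' hPy hPy'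
    funext i
    rw [hw i, hw' i, huniq i.val (by omega : i.val ≤ m)]
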